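/- Let p_i, q_i (i = 1,…,k) be probability distributions on finite sets Z_i with e^{-ε_i} ≤ p_i(z_i)/q_i(z_i) ≤ e^{ε_i}, let P = ∏ p_i and Q = ∏ q_i on Z = ∏ Z_i, and let L(z) = Σ_i log(p_i(z_i)/q_i(z_i)). Set μ := Σ_i D_KL(p_i‖q_i) and t := √(2 log(1/δ) Σ_i ε_i²) for δ ∈ (0,1). Then P(L > μ + t) ≤ δ. -/

import Mathlib

open BigOperators
open scoped Classical

/-- **Hoeffding tail bound for the total privacy loss.**
Let `p_i, q_i` be fully supported probability distributions on finite sets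
`Z_i` with `e^{-ε_i} ≤ p_i/q_i ≤ e^{ε_i}`, let `P = ∏ p_i`, `Q = ∏ q_i` on the
product space, `L(z) = Σ_i log (p_i(z_i)/q_i(z_i))`,
`μ = Σ_i D_KL(p_i‖q_i)` and `t = √(2 log(1/δ) Σ_i ε_i²)` for `δ ∈ (0,1)`.
Then `P(L > μ + t) ≤ δ`. -/
lemma hoeff_key (P u : ℝ) (hP0 : 0 ≤ P) (hP1 : P ≤ 1) (hu : 0 ≤ u) :
    1 - P + P * Real.exp u ≤ Real.exp (P * u + u ^ 2 / 8) := by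
  set D : ℝ → ℝ := fun x => 1 - P + P * Real.exp x with hDdef
  have hDpos : ∀ x, 0 < D x := by
    intro x
    rcases eq_or_lt_of_le hP0 with h | h
    · simp [hDdef, ← h]
    · have h1 := Real.exp_pos x
      have h2 : 0 ≤ 1 - P := by linarith
      have : 0 < P * Real.exp x := mul_pos h h1
      simp only [hDdef]; linarith
  have hD' : ∀ x, HasDerivAt D (P * Real.exp x) x := by
    intro x
    exact ((Real.hasDerivAt_exp x).const_mul P).const_add (1 - P)
  set G' : ℝ → ℝ := fun x => P + x / 4 - P * Real.exp x / D x with hG'def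
  set G : ℝ → ℝ := fun x => P * x + x ^ 2 / 8 - Real.log (D x) with hGdef
  have hderivG : ∀ x, HasDerivAt G (G' x) x := by
    intro x
    have hlog : HasDerivAt (fun y => Real.log (D y)) (P * Real.exp x / D x) x :=
      (hD' x).log (hDpos x).ne'
    have h1 : HasDerivAt (fun y : ℝ => P * y + y ^ 2 / 8) (P + x / 4) x := by
      have ha : HasDerivAt (fun y : ℝ => P * y) (P * 1) x := (hasDerivAt_id x).const_mul P
      have hb : HasDerivAt (fun y : ℝ => y ^ 2 / 8) ((2 : ℕ) * x ^ 1 / 8) x :=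
        (hasDerivAt_pow 2 x).div_const 8
      have := ha.add hb
      exact this.congr_deriv (by push_cast; ring)
    exact h1.sub hlog
  have hderivG' : ∀ x, HasDerivAt G'
      (1 / 4 - (P * Real.exp x * D x - P * Real.exp x * (P * Real.exp x)) / (D x) ^ 2) x := by
    intro x
    have hN : HasDerivAt (fun y => P * Real.exp y) (P * Real.exp x) x :=
      (Real.hasDerivAt_exp x).const_mul P
    have hdiv : HasDerivAt (fun y => P * Real.exp y / D y)
        ((P * Real.exp x * D x - P * Real.exp x * (P * Real.exp x)) / (D x) ^ 2) x :=
      hN.div (hD' x) (hDpos x).ne'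
    have hlin : HasDerivAt (fun y : ℝ => P + y / 4) (1 / 4) x := by
      simpa using ((hasDerivAt_id x).div_const 4).const_add P
    exact hlin.sub hdiv
  have hG''nonneg : ∀ x, 0 ≤ 1 / 4 -
      (P * Real.exp x * D x - P * Real.exp x * (P * Real.exp x)) / (D x) ^ 2 := by
    intro x
    have hDx := hDpos x
    have hE := Real.exp_pos x
    rw [sub_nonneg, div_le_iff₀ (by positivity)]
    have hDeq : D x = 1 - P + P * Real.exp x := rfl
    nlinarith [sq_nonneg ((1 - P) - P * Real.exp x), mul_nonneg hP0 hE.le]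
  have hG'mono : Monotone G' :=
    monotone_of_hasDerivAt_nonneg hderivG' hG''nonneg
  have hG'0 : G' 0 = 0 := by
    simp [hG'def, hDdef]
  have hG'nonneg : ∀ x, 0 ≤ x → 0 ≤ G' x := by
    intro x hx
    rw [← hG'0]; exact hG'mono hx
  have hGmono : MonotoneOn G (Set.Ici 0) := by
    apply monotoneOn_of_hasDerivWithinAt_nonneg (convex_Ici 0)
      (fun x _ => (hderivG x).continuousAt.continuousWithinAt)
      (fun x hx => (hderivG x).hasDerivWithinAt)
    intro x hx
    rw [interior_Ici] at hx
    exact hG'nonneg x (le_of_lt hx)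
  have hG0 : G 0 = 0 := by simp [hGdef, hDdef]
  have := hGmono (Set.self_mem_Ici) (Set.mem_Ici.mpr hu) hu
  rw [hG0] at this
  have hlog_le : Real.log (D u) ≤ P * u + u ^ 2 / 8 := by
    simp only [hGdef] at this; linarith
  calc 1 - P + P * Real.exp u = D u := rfl
    _ ≤ Real.exp (P * u + u ^ 2 / 8) := by
        rw [← Real.exp_log (hDpos u)]
        exact Real.exp_le_exp.mpr hlog_le

lemma hoeff_mgf {α : Type*} [Fintype α] (w X : α → ℝ) (hw : ∀ z, 0 ≤ w z)
    (hsum : ∑ z, w z = 1) {ε l : ℝ} (hε : 0 ≤ ε) (hl : 0 ≤ l)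
    (hX : ∀ z, |X z| ≤ ε) :
    ∑ z, w z * Real.exp (l * X z)
      ≤ Real.exp (l * (∑ z, w z * X z) + l ^ 2 * ε ^ 2 / 2) := by
  rcases eq_or_lt_of_le hε with hε0 | hεpos
  · have hX0 : ∀ z, X z = 0 := fun z => abs_nonpos_iff.mp (by rw [hε0]; exact hX z)
    simp [hX0, hsum]
    positivity
  set m : ℝ := ∑ z, w z * X z with hm
  have hmle : m ≤ ε := by
    rw [hm, ← one_mul ε, ← hsum, Finset.sum_mul]
    exact Finset.sum_le_sum fun z _ =>
      mul_le_mul_of_nonneg_left (abs_le.mp (hX z)).2 (hw z)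
  have hmge : -ε ≤ m := by
    rw [hm]
    calc -ε = ∑ z, w z * (-ε) := by rw [← Finset.sum_mul, hsum, one_mul]
      _ ≤ _ := Finset.sum_le_sum fun z _ =>
        mul_le_mul_of_nonneg_left (abs_le.mp (hX z)).1 (hw z)
  have key : ∀ z, Real.exp (l * X z) ≤
      (ε - X z) / (2 * ε) * Real.exp (-(l * ε)) + (X z + ε) / (2 * ε) * Real.exp (l * ε) := by
    intro z
    have hx1 := (abs_le.mp (hX z)).1
    have hx2 := (abs_le.mp (hX z)).2
    have h1 : (0:ℝ) ≤ (ε - X z) / (2 * ε) := div_nonneg (by linarith) (by linarith)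
    have h2 : (0:ℝ) ≤ (X z + ε) / (2 * ε) := div_nonneg (by linarith) (by linarith)
    have h3 : (ε - X z) / (2 * ε) + (X z + ε) / (2 * ε) = 1 := by
      field_simp
      ring
    have hc := convexOn_exp.2 (Set.mem_univ (-(l * ε))) (Set.mem_univ (l * ε)) h1 h2 h3
    have harg : ((ε - X z) / (2 * ε)) • (-(l * ε)) + ((X z + ε) / (2 * ε)) • (l * ε)
        = l * X z := by
      simp only [smul_eq_mul]
      rw [div_mul_eq_mul_div, div_mul_eq_mul_div, ← add_div,
        div_eq_iff (by positivity : (0:ℝ) < 2 * ε).ne']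
      ring
    rw [harg] at hc
    simpa [smul_eq_mul] using hc
  have step1 : ∑ z, w z * Real.exp (l * X z) ≤
      (ε - m) / (2 * ε) * Real.exp (-(l * ε)) + (m + ε) / (2 * ε) * Real.exp (l * ε) := by
    have hle : ∑ z, w z * Real.exp (l * X z) ≤
        ∑ z, w z * ((ε - X z) / (2 * ε) * Real.exp (-(l * ε)) +
          (X z + ε) / (2 * ε) * Real.exp (l * ε)) :=
      Finset.sum_le_sum fun z _ => mul_le_mul_of_nonneg_left (key z) (hw z)
    refine hle.trans (le_of_eq ?_)
    have e1 : ∑ z, w z * (ε - X z) = ε - m := by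
      simp only [mul_sub]
      rw [Finset.sum_sub_distrib, ← Finset.sum_mul, hsum, one_mul, hm]
    have e2 : ∑ z, w z * (X z + ε) = m + ε := by
      simp only [mul_add]
      rw [Finset.sum_add_distrib, ← Finset.sum_mul, hsum, one_mul, hm]
    calc ∑ z, w z * ((ε - X z) / (2 * ε) * Real.exp (-(l * ε)) +
          (X z + ε) / (2 * ε) * Real.exp (l * ε))
        = (∑ z, w z * (ε - X z)) * (Real.exp (-(l * ε)) / (2 * ε)) +
          (∑ z, w z * (X z + ε)) * (Real.exp (l * ε) / (2 * ε)) := by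
          rw [Finset.sum_mul, Finset.sum_mul, ← Finset.sum_add_distrib]
          exact Finset.sum_congr rfl fun z _ => by ring
      _ = (ε - m) / (2 * ε) * Real.exp (-(l * ε)) + (m + ε) / (2 * ε) * Real.exp (l * ε) := by
          rw [e1, e2]; ring
  set Pp : ℝ := (m + ε) / (2 * ε) with hPp
  have hPp0 : 0 ≤ Pp := div_nonneg (by linarith) (by linarith)
  have hPp1 : Pp ≤ 1 := by
    rw [hPp, div_le_one (by linarith)]
    linarith
  have hu0 : 0 ≤ 2 * l * ε := by positivity
  have hk := hoeff_key Pp (2 * l * ε) hPp0 hPp1 hu0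
  have heq : (ε - m) / (2 * ε) * Real.exp (-(l * ε)) + (m + ε) / (2 * ε) * Real.exp (l * ε)
      = Real.exp (-(l * ε)) * (1 - Pp + Pp * Real.exp (2 * l * ε)) := by
    rw [hPp]
    have h1mp : 1 - (m + ε) / (2 * ε) = (ε - m) / (2 * ε) := by
      field_simp
      ring
    rw [h1mp]
    have : Real.exp (l * ε) = Real.exp (-(l * ε)) * Real.exp (2 * l * ε) := by
      rw [← Real.exp_add]; ring_nf
    rw [this]
    ring
  refine step1.trans ?_
  rw [heq]
  calc Real.exp (-(l * ε)) * (1 - Pp + Pp * Real.exp (2 * l * ε))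
      ≤ Real.exp (-(l * ε)) * Real.exp (Pp * (2 * l * ε) + (2 * l * ε) ^ 2 / 8) :=
        mul_le_mul_of_nonneg_left hk (Real.exp_pos _).le
    _ = Real.exp (-(l * ε) + (Pp * (2 * l * ε) + (2 * l * ε) ^ 2 / 8)) := by
        rw [← Real.exp_add]
    _ = Real.exp (l * m + l ^ 2 * ε ^ 2 / 2) := by
        congr 1
        rw [hPp]
        field_simp
        ring

theorem hoeffding_privacy_loss_tail
    (k : ℕ) (Z : Fin k → Type*) [∀ i, Fintype (Z i)]
    (p q : ∀ i, Z i → ℝ) (ε : Fin k → ℝ) (δ : ℝ)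
    (hε : ∀ i, 0 ≤ ε i)
    (hp : ∀ i z, 0 < p i z) (hq : ∀ i z, 0 < q i z)
    (hpsum : ∀ i, ∑ z, p i z = 1) (hqsum : ∀ i, ∑ z, q i z = 1)
    (hlo : ∀ i z, Real.exp (-(ε i)) ≤ p i z / q i z)
    (hhi : ∀ i z, p i z / q i z ≤ Real.exp (ε i))
    (hδ0 : 0 < δ) (hδ1 : δ < 1) :
    ∑ z ∈ Finset.univ.filter (fun z : ∀ i, Z i =>
        (∑ i, ∑ zi, p i zi * Real.log (p i zi / q i zi))
          + Real.sqrt (2 * Real.log (1 / δ) * ∑ i, ε i ^ 2)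
        < ∑ i, Real.log (p i (z i) / q i (z i))),
      ∏ i, p i (z i)
    ≤ δ := by
  -- notation
  set L : ∀ i, Z i → ℝ := fun i zi => Real.log (p i zi / q i zi) with hLdef
  have hratio : ∀ i zi, 0 < p i zi / q i zi := fun i zi => div_pos (hp i zi) (hq i zi)
  have hLabs : ∀ i zi, |L i zi| ≤ ε i := by
    intro i zi
    rw [abs_le]
    constructor
    · rw [hLdef, ← Real.log_exp (-(ε i))]
      exact Real.log_le_log (Real.exp_pos _) (hlo i zi)
    · rw [hLdef, ← Real.log_exp (ε i)]
      exact Real.log_le_log (hratio i zi) (hhi i zi)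
  set S : ℝ := ∑ i, ε i ^ 2 with hSdef
  have hS0 : 0 ≤ S := Finset.sum_nonneg fun i _ => sq_nonneg _
  set μ : ℝ := ∑ i, ∑ zi, p i zi * L i zi with hμdef
  rcases eq_or_lt_of_le hS0 with hSzero | hSpos
  · -- degenerate case : all ε i = 0
    have hεi0 : ∀ i, ε i = 0 := by
      intro i
      have h := (Finset.sum_eq_zero_iff_of_nonneg
        (fun i _ => sq_nonneg (ε i))).mp hSzero.symm i (Finset.mem_univ i)
      exact (pow_eq_zero_iff two_ne_zero).mp h
    have hlog0 : ∀ i zi, L i zi = 0 := fun i zi =>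
      abs_nonpos_iff.mp (by simpa [hεi0 i] using hLabs i zi)
    rw [Finset.filter_false_of_mem, Finset.sum_empty]
    · exact hδ0.le
    · intro z _
      have hlog0' : ∀ i (zi : Z i), Real.log (p i zi / q i zi) = 0 := hlog0
      simp [hlog0', hlog0, hμdef, ← hSzero]
  · -- main case
    have hlog1δ : 0 < Real.log (1 / δ) :=
      Real.log_pos (one_lt_one_div hδ0 hδ1)
    set t : ℝ := Real.sqrt (2 * Real.log (1 / δ) * S) with htdef
    have ht0 : 0 ≤ t := Real.sqrt_nonneg _
    have ht2 : t ^ 2 = 2 * Real.log (1 / δ) * S := by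
      rw [htdef]; exact Real.sq_sqrt (by positivity)
    set l : ℝ := t / S with hldef
    have hl0 : 0 ≤ l := div_nonneg ht0 hS0
    set c : ℝ := μ + t with hcdef
    have hPnn : ∀ z : ∀ i, Z i, 0 ≤ ∏ i, p i (z i) :=
      fun z => Finset.prod_nonneg fun i _ => (hp i (z i)).le
    -- Chernoff step
    have step1 : ∑ z ∈ Finset.univ.filter (fun z : ∀ i, Z i => c < ∑ i, L i (z i)),
        ∏ i, p i (z i)
        ≤ Real.exp (-(l * c)) *
          ∑ z : ∀ i, Z i, (∏ i, p i (z i)) * Real.exp (l * ∑ i, L i (z i)) := by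
      rw [Finset.mul_sum]
      calc ∑ z ∈ Finset.univ.filter (fun z : ∀ i, Z i => c < ∑ i, L i (z i)), ∏ i, p i (z i)
          ≤ ∑ z ∈ Finset.univ.filter (fun z : ∀ i, Z i => c < ∑ i, L i (z i)),
            Real.exp (-(l * c)) * ((∏ i, p i (z i)) * Real.exp (l * ∑ i, L i (z i))) := by
            apply Finset.sum_le_sum
            intro z hz
            have hz' := (Finset.mem_filter.mp hz).2
            have : (1:ℝ) ≤ Real.exp (-(l * c)) * Real.exp (l * ∑ i, L i (z i)) := by
              rw [← Real.exp_add]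
              apply Real.one_le_exp
              have : 0 ≤ l * (∑ i, L i (z i) - c) := mul_nonneg hl0 (by linarith)
              nlinarith
            calc ∏ i, p i (z i) = (∏ i, p i (z i)) * 1 := by ring
              _ ≤ (∏ i, p i (z i)) *
                  (Real.exp (-(l * c)) * Real.exp (l * ∑ i, L i (z i))) :=
                  mul_le_mul_of_nonneg_left this (hPnn z)
              _ = Real.exp (-(l * c)) * ((∏ i, p i (z i)) * Real.exp (l * ∑ i, L i (z i))) := by
                  ring
        _ ≤ ∑ z : ∀ i, Z i,
            Real.exp (-(l * c)) * ((∏ i, p i (z i)) * Real.exp (l * ∑ i, L i (z i))) := by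
            apply Finset.sum_le_sum_of_subset_of_nonneg (Finset.filter_subset _ _)
            intro z _ _
            exact mul_nonneg (Real.exp_pos _).le
              (mul_nonneg (hPnn z) (Real.exp_pos _).le)
    -- factorize the mgf over coordinates
    have step2 : ∑ z : ∀ i, Z i, (∏ i, p i (z i)) * Real.exp (l * ∑ i, L i (z i))
        = ∏ i, ∑ zi, p i zi * Real.exp (l * L i zi) := by
      rw [Fintype.prod_sum]
      apply Finset.sum_congr rfl
      intro z _
      rw [Finset.mul_sum, Real.exp_sum, Finset.prod_mul_distrib]
    -- bound each factor
    have step3 : ∏ i, ∑ zi, p i zi * Real.exp (l * L i zi)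
        ≤ Real.exp (l * μ + l ^ 2 * S / 2) := by
      have hfac : ∀ i, ∑ zi, p i zi * Real.exp (l * L i zi)
          ≤ Real.exp (l * (∑ zi, p i zi * L i zi) + l ^ 2 * (ε i) ^ 2 / 2) :=
        fun i => hoeff_mgf (p i) (L i) (fun zi => (hp i zi).le) (hpsum i)
          (hε i) hl0 (hLabs i)
      calc ∏ i, ∑ zi, p i zi * Real.exp (l * L i zi)
          ≤ ∏ i, Real.exp (l * (∑ zi, p i zi * L i zi) + l ^ 2 * (ε i) ^ 2 / 2) := by
            apply Finset.prod_le_prod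
            · intro i _
              exact Finset.sum_nonneg fun zi _ =>
                mul_nonneg (hp i zi).le (Real.exp_pos _).le
            · intro i _
              exact hfac i
        _ = Real.exp (∑ i, (l * (∑ zi, p i zi * L i zi) + l ^ 2 * (ε i) ^ 2 / 2)) := by
            rw [Real.exp_sum]
        _ = Real.exp (l * μ + l ^ 2 * S / 2) := by
            congr 1
            rw [hμdef, hSdef, Finset.sum_add_distrib, Finset.mul_sum, Finset.mul_sum,
              Finset.sum_div]
    -- put it together
    have hexp : Real.exp (-(l * c)) * Real.exp (l * μ + l ^ 2 * S / 2) = δ := by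
      rw [← Real.exp_add]
      rw [show -(l * c) + (l * μ + l ^ 2 * S / 2) = -(l * t) + l ^ 2 * S / 2 by
        rw [hcdef]; ring]
      rw [← Real.exp_log hδ0]
      congr 1
      have hSne : S ≠ 0 := ne_of_gt hSpos
      have htt : t ^ 2 = -(2 * Real.log δ * S) := by
        rw [ht2, one_div, Real.log_inv]; ring
      rw [hldef]
      field_simp
      nlinarith [htt]
    calc ∑ z ∈ Finset.univ.filter (fun z : ∀ i, Z i => c < ∑ i, L i (z i)), ∏ i, p i (z i)
        ≤ Real.exp (-(l * c)) *
          ∑ z : ∀ i, Z i, (∏ i, p i (z i)) * Real.exp (l * ∑ i, L i (z i)) := step1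
      _ = Real.exp (-(l * c)) * ∏ i, ∑ zi, p i zi * Real.exp (l * L i zi) := by rw [step2]
      _ ≤ Real.exp (-(l * c)) * Real.exp (l * μ + l ^ 2 * S / 2) :=
          mul_le_mul_of_nonneg_left step3 (Real.exp_pos _).le
      _ = δ := hexp
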